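/- Let G be a finite connected bipartite simple graph and let pq and rs be edges of G. Then pq ∼_G rs if and only if exactly one of the two equalities d(p,r) = d(q,r) + 1 and d(p,s) = d(q,s) + 1 holds (that is, exactly one of r and s has a shortest path to p that passes through q). -/

import Mathlib

/-- Winkler's relation. -/
def Winkler {V : Type*} (G : SimpleGraph V) (p q r s : V) : Prop :=
  G.dist p r + G.dist q s ≠ G.dist p s + G.dist q r

private lemma coloring_walk_parity {V : Type*} {G : SimpleGraph V}
    (C : G.Coloring (ZMod 2)) {u v : V} (w : G.Walk u v) :
    (C v : ZMod 2) = C u + w.length := by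
  induction w with
  | nil => simp
  | cons h w ih =>
    rename_i a b c
    have hne := C.valid h
    have hab : C b = C a + 1 := by
      revert hne; generalize C a = x; generalize C b = y; revert x y; decide
    simp only [SimpleGraph.Walk.length_cons, ih, hab]
    push_cast
    ring

private lemma dist_adj_offset {V : Type*} {G : SimpleGraph V} (hconn : G.Connected)
    (hbip : G.Colorable 2) {u v : V} (huv : G.Adj u v) (w : V) :
    G.dist u w = G.dist v w + 1 ∨ G.dist v w = G.dist u w + 1 := by
  obtain ⟨C⟩ := hbip
  let C' : G.Coloring (ZMod 2) :=
    SimpleGraph.Coloring.mk (fun x => ((C x : Fin 2) : ZMod 2)) (by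
      intro a b hab h
      refine C.valid hab ?_
      have key : ∀ x y : Fin 2, ((x : ZMod 2) = (y : ZMod 2)) → x = y := by decide
      exact key _ _ h)
  obtain ⟨w1, hw1⟩ := (hconn u w).exists_walk_length_eq_dist
  obtain ⟨w2, hw2⟩ := (hconn v w).exists_walk_length_eq_dist
  have h1 : (C' w : ZMod 2) = C' u + G.dist u w := by
    simpa [hw1] using coloring_walk_parity C' w1
  have h2 : (C' w : ZMod 2) = C' v + G.dist v w := by
    simpa [hw2] using coloring_walk_parity C' w2
  have hne : C' u ≠ C' v := C'.valid huv
  have hd : (G.dist u w : ZMod 2) ≠ (G.dist v w : ZMod 2) := by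
    intro h
    apply hne
    have := h1.symm.trans h2
    rw [← h] at this
    exact add_right_cancel this
  have hdn : G.dist u w ≠ G.dist v w := fun h => hd (by rw [h])
  have t1 : G.dist u w ≤ G.dist v w + 1 := by
    have := hconn.dist_triangle (u := u) (v := v) (w := w)
    rwa [SimpleGraph.dist_eq_one_iff_adj.mpr huv, add_comm] at this
  have t2 : G.dist v w ≤ G.dist u w + 1 := by
    have := hconn.dist_triangle (u := v) (v := u) (w := w)
    rwa [SimpleGraph.dist_eq_one_iff_adj.mpr huv.symm, add_comm] at this
  omega

/-- In a finite connected bipartite graph, `pq ∼_G rs` iff exactly one of `r`, `s`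
has a shortest path to `p` passing through `q`. -/
theorem winkler_iff_xor_shortest_path
    {V : Type*} [Fintype V] (G : SimpleGraph V) (hconn : G.Connected)
    (hbip : G.Colorable 2) {p q r s : V} (hpq : G.Adj p q) (hrs : G.Adj r s) :
    Winkler G p q r s ↔
      Xor' (G.dist p r = G.dist q r + 1) (G.dist p s = G.dist q s + 1) := by
  have h1 := dist_adj_offset hconn hbip hpq r
  have h2 := dist_adj_offset hconn hbip hpq s
  unfold Winkler Xor'
  simp only [Xor] at *
  omega
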